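/- arXiv:1505.05745 — 4 statements merged into one kernel-verified Lean document; each statement's English description precedes it below -/
import Mathlib

section
/- For every m ≥ 1 and every real t ≥ 2, (-1)^m M_m(-t) > 0, where M_m is the m-th necklace polynomial. -/
open Polynomial

/-- The m-th necklace polynomial `M_m(X) = (1/m) ∑_{d ∣ m} μ(d) X^(m/d)` over `ℚ`. -/
noncomputable def necklace (m : ℕ) : Polynomial ℚ :=
  Polynomial.C ((m : ℚ)⁻¹) *
    ∑ d ∈ m.divisors, Polynomial.C ((ArithmeticFunction.moebius d : ℤ) : ℚ) * X ^ (m / d)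

lemma geom_aux (t : ℝ) (ht : 2 ≤ t) (n : ℕ) :
    ∑ i ∈ Finset.range n, t ^ i ≤ t ^ n - 1 := by
  induction n with
  | zero => simp
  | succ n ih =>
    rw [Finset.sum_range_succ, pow_succ]
    nlinarith [pow_nonneg (by linarith : (0:ℝ) ≤ t) n]

theorem necklace_alternating_pos (m : ℕ) (hm : 1 ≤ m) (t : ℝ) (ht : 2 ≤ t) :
    0 < (-1) ^ m * Polynomial.aeval (-t) (necklace m) := by
  have ht0 : (0:ℝ) < t := by linarith
  have hev : Polynomial.aeval (-t) (necklace m) =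
      (m:ℝ)⁻¹ * ∑ d ∈ m.divisors,
        ((ArithmeticFunction.moebius d : ℤ) : ℝ) * (-t) ^ (m / d) := by
    simp [necklace, map_sum]
  rw [hev]
  have h1 : (1:ℕ) ∈ m.divisors := Nat.one_mem_divisors.mpr (by omega)
  set f : ℕ → ℝ := fun d => ((ArithmeticFunction.moebius d : ℤ) : ℝ) * (-t) ^ (m / d) with hf
  have hsplit : ∑ d ∈ m.divisors, f d = (∑ d ∈ m.divisors.erase 1, f d) + (-t) ^ m := by
    rw [← Finset.sum_erase_add m.divisors f h1]
    congr 1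
    simp [hf]
  set R : ℝ := ∑ d ∈ m.divisors.erase 1, f d with hR
  set K := m / 2 with hK
  -- bound |R|
  have habs : |R| ≤ ∑ d ∈ m.divisors.erase 1, t ^ (m / d) := by
    refine (Finset.abs_sum_le_sum_abs _ _).trans (Finset.sum_le_sum fun d hd => ?_)
    rw [hf, abs_mul, abs_pow, abs_neg, abs_of_pos ht0]
    have : |((ArithmeticFunction.moebius d : ℤ) : ℝ)| ≤ 1 := by
      have := ArithmeticFunction.abs_moebius_le_one (n := d)
      exact_mod_cast (by exact_mod_cast this : |((ArithmeticFunction.moebius d : ℤ) : ℝ)| ≤ (1:ℝ))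
    nlinarith [pow_pos ht0 (m / d)]
  have hinj : ∀ d1 ∈ m.divisors.erase 1, ∀ d2 ∈ m.divisors.erase 1,
      m / d1 = m / d2 → d1 = d2 := by
    intro d1 hd1 d2 hd2 h
    have h1' := Nat.mem_divisors.mp (Finset.mem_of_mem_erase hd1)
    have h2' := Nat.mem_divisors.mp (Finset.mem_of_mem_erase hd2)
    have e1 : m / (m / d1) = d1 := Nat.div_div_self h1'.1 h1'.2
    have e2 : m / (m / d2) = d2 := Nat.div_div_self h2'.1 h2'.2
    rw [← e1, ← e2, h]
  have himg : ∑ d ∈ m.divisors.erase 1, t ^ (m / d) ≤ ∑ k ∈ Finset.Icc 1 K, t ^ k := by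
    rw [show (∑ d ∈ m.divisors.erase 1, t ^ (m / d)) =
        ∑ k ∈ (m.divisors.erase 1).image (fun d => m / d), t ^ k from
      (Finset.sum_image hinj).symm]
    refine Finset.sum_le_sum_of_subset_of_nonneg ?_ (fun k _ _ => (pow_pos ht0 k).le)
    intro k hk
    obtain ⟨d, hd, rfl⟩ := Finset.mem_image.mp hk
    have hd1 : d ≠ 1 := Finset.ne_of_mem_erase hd
    have hdm := Nat.mem_divisors.mp (Finset.mem_of_mem_erase hd)
    have hd2 : 2 ≤ d := by
      rcases Nat.lt_or_ge d 2 with h | h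
      · interval_cases d
        · exact absurd hdm.1 (by simpa using hdm.2 ∘ fun h => (Nat.eq_zero_of_zero_dvd h))
        · exact absurd rfl hd1
      · exact h
    refine Finset.mem_Icc.mpr ⟨Nat.one_le_div_iff (by omega) |>.mpr (Nat.le_of_dvd (by omega) hdm.1), ?_⟩
    exact Nat.div_le_div_left hd2 (by omega)
  have hgeo : ∑ k ∈ Finset.Icc 1 K, t ^ k < t ^ m := by
    have hKm : K + 1 ≤ m := by omega
    have hsub : Finset.Icc 1 K ⊆ Finset.range (K + 1) := by
      intro k hk; simp at hk ⊢; omega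
    have h1le : (∑ k ∈ Finset.Icc 1 K, t ^ k) + 1 ≤ ∑ k ∈ Finset.range (K+1), t ^ k := by
      have : Finset.range (K+1) = insert 0 (Finset.Icc 1 K) := by
        ext k; simp; omega
      rw [this, Finset.sum_insert (by simp)]
      simp [add_comm]
    have := geom_aux t ht (K + 1)
    have hpow : t ^ (K + 1) ≤ t ^ m := pow_le_pow_right₀ (by linarith) hKm
    linarith
  have hRbound : |R| < t ^ m := lt_of_le_of_lt (habs.trans himg) hgeo
  have hkey : 0 < (-1:ℝ) ^ m * ∑ d ∈ m.divisors, f d := by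
    rw [hsplit, mul_add]
    have h2 : (-1:ℝ) ^ m * (-t) ^ m = t ^ m := by
      rw [neg_pow t, ← mul_assoc, ← mul_pow]
      simp
    rw [h2]
    have : -(t ^ m) < (-1:ℝ) ^ m * R := by
      have h3 : |(-1:ℝ) ^ m * R| = |R| := by
        rw [abs_mul, abs_pow, abs_neg, abs_one, one_pow, one_mul]
      have := abs_lt.mp (h3 ▸ hRbound)
      linarith [this.1]
    linarith
  have hm0 : (0:ℝ) < (m:ℝ)⁻¹ := by positivity
  calc (0:ℝ) < (m:ℝ)⁻¹ * ((-1)^m * ∑ d ∈ m.divisors, f d) := by positivity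
    _ = (-1)^m * ((m:ℝ)⁻¹ * ∑ d ∈ m.divisors, f d) := by ring
end

section
/- For n ≥ 2 and a partition λ of n, the cycle polynomial N_λ(X) is NOT divisible by (X-1)^2 if and only if λ is a rectangle [b^a] with ab = n, or a rectangle plus one box [d^c, 1] with cd = n − 1. -/
open Polynomial

/-- The polynomial binomial coefficient binom(P, k) = P(P-1)⋯(P-k+1)/k!. -/
noncomputable def polyBinom (P : Polynomial ℚ) (k : ℕ) : Polynomial ℚ :=
  Polynomial.C ((k.factorial : ℚ)⁻¹) * ∏ i ∈ Finset.range k, (P - Polynomial.C (i : ℚ))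

/-- The cycle polynomial N_lam(X) = ∏_{j=1}^n binom(M_j(X), m_j(lam)). -/
noncomputable def cyclePoly (n : ℕ) (lam : Nat.Partition n) : Polynomial ℚ :=
  ∏ j ∈ Finset.Icc 1 n, polyBinom (necklace j) (Multiset.count j lam.parts)


lemma necklace_one : necklace 1 = X := by
  simp [necklace, Nat.divisors_one]

lemma coeff_necklace_self {j : ℕ} (hj : 1 ≤ j) : (necklace j).coeff j = (j : ℚ)⁻¹ := by
  rw [necklace, coeff_C_mul, finset_sum_coeff]
  rw [Finset.sum_eq_single 1]
  · simp
  · intro d hd hd1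
    have hdvd := Nat.dvd_of_mem_divisors hd
    have h2 : 2 ≤ d := by
      rcases Nat.pos_of_mem_divisors hd with h
      omega
    have : j / d < j := Nat.div_lt_self (by omega) (by omega)
    simp [coeff_C_mul, coeff_X_pow]
    omega
  · intro h
    exact absurd (Nat.one_mem_divisors.2 (by omega)) h

lemma necklace_sub_C_ne_zero {j : ℕ} (hj : 1 ≤ j) (q : ℚ) : necklace j - C q ≠ 0 := by
  intro h
  have : (necklace j - C q).coeff j = 0 := by rw [h]; simp
  rw [coeff_sub, coeff_necklace_self hj, coeff_C, if_neg (by omega)] at this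
  have : (j : ℚ)⁻¹ = 0 := by linarith
  exact (inv_ne_zero (by exact_mod_cast (by omega : j ≠ 0))) this

lemma necklace_ne_zero {j : ℕ} (hj : 1 ≤ j) : necklace j ≠ 0 := by
  have := necklace_sub_C_ne_zero hj 0
  simpa using this


lemma sum_moebius_eq_zero {j : ℕ} (hj : 2 ≤ j) :
    ∑ d ∈ j.divisors, (ArithmeticFunction.moebius d : ℤ) = 0 := by
  have h := congrArg (fun f => f j) ArithmeticFunction.moebius_mul_coe_zeta
  simp only [ArithmeticFunction.mul_apply, ArithmeticFunction.one_apply] at h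
  rw [if_neg (by omega)] at h
  rw [← h, ← Nat.sum_divisorsAntidiagonal (fun a b => (ArithmeticFunction.moebius a : ℤ))]
  apply Finset.sum_congr rfl
  intro x hx
  have hx2 : x.2 ≠ 0 := Nat.pos_of_mem_divisors (Nat.snd_mem_divisors_of_mem_antidiagonal hx) |>.ne'
  simp [ArithmeticFunction.natCoe_apply, ArithmeticFunction.zeta_apply, hx2]

lemma sum_moebius_mul_div {j : ℕ} (hj : 1 ≤ j) :
    ∑ d ∈ j.divisors, (ArithmeticFunction.moebius d : ℚ) * (j / d : ℕ) = (Nat.totient j : ℚ) := by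
  have key := (ArithmeticFunction.sum_eq_iff_sum_mul_moebius_eq
    (R := ℚ) (f := fun i => (Nat.totient i : ℚ)) (g := fun i => (i : ℚ))).1 ?_ j (by omega)
  · rw [← key, ← Nat.sum_divisorsAntidiagonal
      (fun a b => (ArithmeticFunction.moebius a : ℚ) * (b : ℚ))]
  · intro m hm
    rw [← Nat.cast_sum]
    exact_mod_cast congrArg (Nat.cast : ℕ → ℚ) (Nat.sum_totient m)


lemma eval_one_necklace {j : ℕ} (hj : 2 ≤ j) : eval 1 (necklace j) = 0 := by
  have h := sum_moebius_eq_zero hj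
  simp only [necklace, eval_mul, eval_C, eval_finset_sum, eval_mul, eval_pow, eval_X, one_pow,
    mul_one]
  have : ∑ d ∈ j.divisors, ((ArithmeticFunction.moebius d : ℤ) : ℚ) = 0 := by
    exact_mod_cast congrArg (Int.cast : ℤ → ℚ) h
  rw [this, mul_zero]

lemma eval_one_derivative_necklace {j : ℕ} (hj : 1 ≤ j) :
    eval 1 (derivative (necklace j)) = (Nat.totient j : ℚ) / j := by
  rw [necklace, derivative_C_mul, derivative_sum]
  simp only [derivative_C_mul, derivative_X_pow, eval_mul, eval_C, eval_finset_sum,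
    eval_mul, eval_pow, eval_X, one_pow, mul_one, eval_natCast]
  rw [show ∀ S : ℚ, (j:ℚ)⁻¹ * S = S / j by intro S; rw [div_eq_inv_mul]]
  congr 1
  rw [← sum_moebius_mul_div hj]


lemma rootMultiplicity_one_necklace {j : ℕ} (hj : 2 ≤ j) :
    rootMultiplicity 1 (necklace j) = 1 := by
  have hne := necklace_ne_zero (by omega : 1 ≤ j)
  have h1 : 0 < rootMultiplicity 1 (necklace j) :=
    (rootMultiplicity_pos hne).2 (eval_one_necklace hj)
  have h2 : ¬ 1 < rootMultiplicity 1 (necklace j) := by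
    rw [one_lt_rootMultiplicity_iff_isRoot hne]
    rintro ⟨-, hd⟩
    have := eval_one_derivative_necklace (by omega : 1 ≤ j)
    rw [IsRoot.def] at hd
    rw [hd] at this
    have ht : 0 < Nat.totient j := Nat.totient_pos.2 (by omega)
    have hj0 : (0:ℚ) < j := by exact_mod_cast (by omega : 0 < j)
    have h3 : (Nat.totient j : ℚ) / j > 0 := div_pos (by exact_mod_cast ht) hj0
    rw [← this] at h3
    exact lt_irrefl 0 h3
  omega

lemma rootMultiplicity_finset_prod {ι : Type*} (s : Finset ι) (f : ι → Polynomial ℚ)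
    (hf : ∀ i ∈ s, f i ≠ 0) (a : ℚ) :
    rootMultiplicity a (∏ i ∈ s, f i) = ∑ i ∈ s, rootMultiplicity a (f i) := by
  induction s using Finset.cons_induction with
  | empty => simp
  | cons i s his ih =>
    rw [Finset.prod_cons, Finset.sum_cons, rootMultiplicity_mul, ih (fun i hi => hf i (by simp [hi]))]
    apply mul_ne_zero (hf i (by simp))
    rw [Finset.prod_ne_zero_iff]
    exact fun i hi => hf i (by simp [hi])


lemma polyBinom_ne_zero {P : Polynomial ℚ} {k : ℕ} (h : ∀ i ∈ Finset.range k, P - C (i:ℚ) ≠ 0) :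
    polyBinom P k ≠ 0 := by
  unfold polyBinom
  apply mul_ne_zero
  · simpa using Nat.factorial_ne_zero k
  · rw [Finset.prod_ne_zero_iff]; exact h

lemma rootMultiplicity_polyBinom {P : Polynomial ℚ} {k : ℕ}
    (h : ∀ i ∈ Finset.range k, P - C (i:ℚ) ≠ 0) :
    rootMultiplicity 1 (polyBinom P k)
      = ∑ i ∈ Finset.range k, rootMultiplicity 1 (P - C (i:ℚ)) := by
  unfold polyBinom
  rw [rootMultiplicity_mul, rootMultiplicity_C, rootMultiplicity_finset_prod _ _ h, zero_add]
  apply mul_ne_zero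
  · simpa using Nat.factorial_ne_zero k
  · rw [Finset.prod_ne_zero_iff]; exact h

lemma rM_polyBinom_one (k : ℕ) :
    rootMultiplicity 1 (polyBinom (necklace 1) k) = if 2 ≤ k then 1 else 0 := by
  rw [necklace_one, rootMultiplicity_polyBinom (fun i _ => X_sub_C_ne_zero _)]
  have : ∀ i ∈ Finset.range k, rootMultiplicity (1:ℚ) (X - C (i:ℚ))
      = if i = 1 then 1 else 0 := by
    intro i _
    rw [rootMultiplicity_X_sub_C]
    by_cases h : i = 1
    · simp [h]
    · have : (1:ℚ) ≠ (i:ℚ) := by exact_mod_cast (fun hh => h hh.symm : ¬ 1 = i)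
      rw [if_neg h, if_neg this]
  rw [Finset.sum_congr rfl this, Finset.sum_ite_eq' (Finset.range k) 1 (fun _ => 1)]
  by_cases h : 2 ≤ k <;> simp [Finset.mem_range, h] <;> omega

lemma rM_polyBinom (j k : ℕ) (hj : 2 ≤ j) :
    rootMultiplicity 1 (polyBinom (necklace j) k) = if 1 ≤ k then 1 else 0 := by
  rw [rootMultiplicity_polyBinom (fun i _ => necklace_sub_C_ne_zero (by omega) _)]
  have : ∀ i ∈ Finset.range k, rootMultiplicity (1:ℚ) (necklace j - C (i:ℚ))
      = if i = 0 then 1 else 0 := by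
    intro i _
    rcases Nat.eq_zero_or_pos i with rfl | hi
    · simpa using rootMultiplicity_one_necklace hj
    · rw [if_neg (by omega)]
      apply rootMultiplicity_eq_zero
      rw [IsRoot.def, eval_sub, eval_C, eval_one_necklace hj, zero_sub]
      simpa using (by exact_mod_cast (by omega : i ≠ 0) : (i:ℚ) ≠ 0)
  rw [Finset.sum_congr rfl this, Finset.sum_ite_eq' (Finset.range k) 0 (fun _ => 1)]
  by_cases h : 1 ≤ k <;> simp [Finset.mem_range, h] <;> omega


lemma sum_indicator_le_one (s : Finset ℕ) (f : ℕ → ℕ) (b : ℕ)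
    (h : ∀ j ∈ s, f j ≤ if j = b then 1 else 0) : ∑ j ∈ s, f j ≤ 1 :=
  le_trans (Finset.sum_le_sum h)
    (by rw [Finset.sum_ite_eq' s b (fun _ => 1)]; split <;> omega)

theorem comb (n : ℕ) (hn : 2 ≤ n) (s : Multiset ℕ)
    (hsum : s.sum = n) (hposs : ∀ {i : ℕ}, i ∈ s → 0 < i)
    (hle : ∀ x ∈ s, x ≤ n) :
    (if 2 ≤ Multiset.count 1 s then 1 else 0)
        + ∑ j ∈ Finset.Icc 2 n, (if 1 ≤ Multiset.count j s then 1 else 0) ≤ 1 ↔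
      (∃ a b : ℕ, a * b = n ∧ s = Multiset.replicate a b) ∨
      (∃ c d : ℕ, c * d = n - 1 ∧ s = Multiset.replicate c d + {1}) := by
  classical
  constructor
  · intro h
    by_cases hb : ∃ b ∈ s, 2 ≤ b
    · obtain ⟨b, hbs, hb2⟩ := hb
      have hbIcc : b ∈ Finset.Icc 2 n := Finset.mem_Icc.2 ⟨hb2, hle b hbs⟩
      have hcb : 1 ≤ Multiset.count b s := Multiset.one_le_count_iff_mem.2 hbs
      have hT2 : 1 ≤ ∑ j ∈ Finset.Icc 2 n, (if 1 ≤ Multiset.count j s then 1 else 0) := by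
        have h1 : (if 1 ≤ Multiset.count b s then 1 else 0)
            ≤ ∑ j ∈ Finset.Icc 2 n, (if 1 ≤ Multiset.count j s then 1 else 0) :=
          Finset.single_le_sum (f := fun j => if 1 ≤ Multiset.count j s then 1 else 0)
            (fun j _ => Nat.zero_le _) hbIcc
        rw [if_pos hcb] at h1
        exact h1
      have hT1 : Multiset.count 1 s ≤ 1 := by
        by_contra hc
        rw [if_pos (by omega)] at h
        omega
      have herase : ∀ j ∈ Finset.Icc 2 n, j ≠ b → Multiset.count j s = 0 := by
        intro j hj hjb
        by_contra hc
        have hjErase : j ∈ (Finset.Icc 2 n).erase b := Finset.mem_erase.2 ⟨hjb, hj⟩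
        have h1j : (if 1 ≤ Multiset.count j s then 1 else 0)
            ≤ ∑ i ∈ (Finset.Icc 2 n).erase b, (if 1 ≤ Multiset.count i s then 1 else 0) :=
          Finset.single_le_sum (f := fun j => if 1 ≤ Multiset.count j s then 1 else 0)
            (fun i _ => Nat.zero_le _) hjErase
        rw [if_pos (by omega)] at h1j
        have hsumer : (if 1 ≤ Multiset.count b s then 1 else 0)
              + ∑ i ∈ (Finset.Icc 2 n).erase b, (if 1 ≤ Multiset.count i s then 1 else 0)
            = ∑ j ∈ Finset.Icc 2 n, (if 1 ≤ Multiset.count j s then 1 else 0) :=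
          Finset.add_sum_erase _ (fun j => if 1 ≤ Multiset.count j s then 1 else 0) hbIcc
        rw [if_pos hcb] at hsumer
        omega
      have hall : ∀ x ∈ s, x = 1 ∨ x = b := by
        intro x hx
        have hx1 : 0 < x := hposs hx
        by_cases hx2 : 2 ≤ x
        · right
          by_contra hxb
          have := herase x (Finset.mem_Icc.2 ⟨hx2, hle x hx⟩) hxb
          rw [Multiset.count_eq_zero] at this
          exact this hx
        · left; omega
      have hsplit : s = Multiset.filter (· = b) s + Multiset.filter (fun x => ¬ x = b) s :=
        (Multiset.filter_add_not _ s).symm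
      have hfb : Multiset.filter (· = b) s = Multiset.replicate (Multiset.count b s) b :=
        Multiset.filter_eq' s b
      have hrest : ∀ x ∈ Multiset.filter (fun x => ¬ x = b) s, x = 1 := by
        intro x hx
        rw [Multiset.mem_filter] at hx
        rcases hall x hx.1 with h1 | h2
        · exact h1
        · exact absurd h2 hx.2
      have hfr : Multiset.filter (fun x => ¬ x = b) s
          = Multiset.replicate (Multiset.card (Multiset.filter (fun x => ¬ x = b) s)) 1 :=
        Multiset.eq_replicate_card.2 hrest
      have hcard1 : Multiset.card (Multiset.filter (fun x => ¬ x = b) s)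
          = Multiset.count 1 s := by
        have hcc := Multiset.count_eq_card.2 (fun x hx => (hrest x hx).symm)
        rw [← hcc]
        conv_rhs => rw [hsplit]
        rw [Multiset.count_add, hfb, Multiset.count_replicate, if_neg (by omega), zero_add]
      have hseq : s = Multiset.replicate (Multiset.count b s) b
          + Multiset.replicate (Multiset.count 1 s) 1 := by
        conv_lhs => rw [hsplit]
        rw [hfb, hfr, hcard1]
      rcases (by omega : Multiset.count 1 s = 0 ∨ Multiset.count 1 s = 1) with hc1 | hc1 <;>
        rw [hc1] at hseq
      · left
        simp only [Multiset.replicate_zero, add_zero] at hseq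
        refine ⟨Multiset.count b s, b, ?_, hseq⟩
        rw [hseq, Multiset.sum_replicate, smul_eq_mul] at hsum
        exact hsum
      · right
        rw [Multiset.replicate_one] at hseq
        refine ⟨Multiset.count b s, b, ?_, hseq⟩
        rw [hseq, Multiset.sum_add, Multiset.sum_replicate, smul_eq_mul,
          Multiset.sum_singleton] at hsum
        omega
    · push_neg at hb
      have hall : ∀ x ∈ s, x = 1 := by
        intro x hx
        have h1 := hposs hx
        have h2 := hb x hx
        omega
      have hrep := Multiset.eq_replicate_card.2 hall
      have hcard : Multiset.card s = n := by
        rw [hrep, Multiset.sum_replicate, smul_eq_mul, mul_one] at hsum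
        exact hsum
      exact Or.inl ⟨n, 1, by omega, by rw [hrep, hcard]⟩
  · rintro (⟨a, b, hab, hparts⟩ | ⟨c, d, hcd, hparts⟩)
    · have hcount : ∀ j, Multiset.count j s = if j = b then a else 0 := by
        intro j; rw [hparts, Multiset.count_replicate]
        split_ifs with h1 h2 h2 <;> first | rfl | omega
      by_cases hb1 : b = 1
      · subst hb1
        have hT2 : ∑ j ∈ Finset.Icc 2 n, (if 1 ≤ Multiset.count j s then 1 else 0) = 0 := by
          apply Finset.sum_eq_zero
          intro j hj
          have hj2 := (Finset.mem_Icc.1 hj).1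
          rw [hcount j, if_neg (by omega : ¬ j = 1)]
          simp
        rw [hT2]
        split <;> omega
      · have hT1 : Multiset.count 1 s = 0 := by
          rw [hcount, if_neg (fun hh => hb1 hh.symm)]
        have hB : (∑ j ∈ Finset.Icc 2 n, if 1 ≤ Multiset.count j s then 1 else 0) ≤ 1 :=
          sum_indicator_le_one (Finset.Icc 2 n)
          (fun j => if 1 ≤ Multiset.count j s then 1 else 0) b
          (fun j _ => by
            show (if 1 ≤ Multiset.count j s then 1 else 0) ≤ _
            rw [hcount j]; split_ifs <;> omega)
        rw [hT1, if_neg (by omega)]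
        omega
    · have hcount : ∀ j, Multiset.count j s
          = (if j = d then c else 0) + (if j = 1 then 1 else 0) := by
        intro j
        rw [hparts, Multiset.count_add, Multiset.count_replicate, Multiset.count_singleton]
        congr 1
        split_ifs with h1 h2 h2 <;> first | rfl | omega
      by_cases hd1 : d = 1
      · subst hd1
        have hT2 : ∑ j ∈ Finset.Icc 2 n, (if 1 ≤ Multiset.count j s then 1 else 0) = 0 := by
          apply Finset.sum_eq_zero
          intro j hj
          have hj2 := (Finset.mem_Icc.1 hj).1
          rw [hcount j, if_neg (by omega : ¬ j = 1), if_neg (by omega : ¬ j = 1)]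
          simp
        rw [hT2]
        split <;> omega
      · have hT1 : Multiset.count 1 s = 1 := by
          rw [hcount, if_neg (fun hh => hd1 hh.symm), if_pos rfl]
        have hB : (∑ j ∈ Finset.Icc 2 n, if 1 ≤ Multiset.count j s then 1 else 0) ≤ 1 :=
          sum_indicator_le_one (Finset.Icc 2 n)
          (fun j => if 1 ≤ Multiset.count j s then 1 else 0) d
          (fun j hj => by
            show (if 1 ≤ Multiset.count j s then 1 else 0) ≤ _
            have hj2 := (Finset.mem_Icc.1 hj).1
            rw [hcount j, if_neg (by omega : ¬ j = 1), add_zero]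
            split_ifs <;> omega)
        rw [hT1, if_neg (by omega)]
        omega

theorem sq_sub_one_not_dvd_cyclePoly_iff (n : ℕ) (hn : 2 ≤ n) (lam : Nat.Partition n) :
    ¬ ((X - 1) ^ 2 ∣ cyclePoly n lam) ↔
      (∃ a b : ℕ, a * b = n ∧ lam.parts = Multiset.replicate a b) ∨
      (∃ c d : ℕ, c * d = n - 1 ∧ lam.parts = Multiset.replicate c d + {1}) := by
  classical
  set s : Multiset ℕ := lam.parts with hs
  have hsum : s.sum = n := lam.parts_sum
  have hposs : ∀ {i : ℕ}, i ∈ s → 0 < i := lam.parts_pos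
  have hle : ∀ x ∈ s, x ≤ n := fun x hx => by
    rw [← hsum]; exact Multiset.single_le_sum (fun y _ => Nat.zero_le y) x hx
  have hfac : ∀ j ∈ Finset.Icc 1 n, polyBinom (necklace j) (Multiset.count j s) ≠ 0 := by
    intro j hj
    exact polyBinom_ne_zero (fun i _ => necklace_sub_C_ne_zero (Finset.mem_Icc.1 hj).1 _)
  have hne : cyclePoly n lam ≠ 0 := by
    rw [cyclePoly, Finset.prod_ne_zero_iff]; exact hfac
  have hsplit : Finset.Icc 1 n = insert 1 (Finset.Icc 2 n) := by
    ext x; simp [Finset.mem_Icc, Finset.mem_insert]; omega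
  have hrm : rootMultiplicity 1 (cyclePoly n lam)
      = (if 2 ≤ Multiset.count 1 s then 1 else 0)
        + ∑ j ∈ Finset.Icc 2 n, (if 1 ≤ Multiset.count j s then 1 else 0) := by
    rw [cyclePoly, rootMultiplicity_finset_prod _ _ hfac, hsplit,
      Finset.sum_insert (by simp), rM_polyBinom_one]
    congr 1
    apply Finset.sum_congr rfl
    intro j hj
    exact rM_polyBinom j _ (Finset.mem_Icc.1 hj).1
  have hdvd : ¬ ((X - 1) ^ 2 ∣ cyclePoly n lam) ↔
      (if 2 ≤ Multiset.count 1 s then 1 else 0)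
        + ∑ j ∈ Finset.Icc 2 n, (if 1 ≤ Multiset.count j s then 1 else 0) ≤ 1 := by
    rw [show (X - 1 : Polynomial ℚ) = X - C 1 by rw [C_1], le_rootMultiplicity_iff hne |>.symm.not]
    omega
  rw [hdvd]
  exact comb n hn s hsum hposs hle
end

section
/- For n ≥ 2 and a factorization n = ab with b > 1, the value of the rational function N_{[b^a]}(X)/(X^{n-1}(X-1)) at X = 1 equals (-1)^{a+1} φ(b)/n. -/
open Polynomial

-- auxiliary lemmas

lemma aux_sum_moebius {b : ℕ} (hb : 1 < b) :
    ∑ d ∈ b.divisors, ((ArithmeticFunction.moebius d : ℤ) : ℚ) = 0 := by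
  have h := congrArg (fun f : ArithmeticFunction ℚ => f b)
    (ArithmeticFunction.coe_moebius_mul_coe_zeta (R := ℚ))
  simp only [ArithmeticFunction.coe_mul_zeta_apply] at h
  have h1 : (1 : ArithmeticFunction ℚ) b = 0 :=
    ArithmeticFunction.one_apply_ne (by omega)
  rw [h1] at h
  simpa [ArithmeticFunction.intCoe_apply] using h

lemma aux_sum_moebius_totient {b : ℕ} (hb : 0 < b) :
    ∑ d ∈ b.divisors, ((ArithmeticFunction.moebius d : ℤ) : ℚ) * ((b / d : ℕ) : ℚ)
      = (Nat.totient b : ℚ) := by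
  have hinv := (ArithmeticFunction.sum_eq_iff_sum_mul_moebius_eq
    (R := ℚ) (f := fun d => (Nat.totient d : ℚ)) (g := fun d => (d : ℚ))).mp
  have hyp : ∀ (n : ℕ), n > 0 → ∑ i ∈ n.divisors, ((Nat.totient i : ℚ)) = (n : ℚ) := by
    intro n _
    rw [← Nat.cast_sum]
    exact_mod_cast congrArg (fun m : ℕ => (m : ℚ)) (Nat.sum_totient n)
  have := hinv hyp b hb
  rw [← this, ← Nat.sum_divisorsAntidiagonal
    (fun d e => ((ArithmeticFunction.moebius d : ℤ) : ℚ) * (e : ℚ))]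

lemma necklace_eval_one {b : ℕ} (hb : 1 < b) : (necklace b).eval 1 = 0 := by
  simp [necklace, eval_finset_sum, aux_sum_moebius hb]

lemma necklace_deriv_eval_one {b : ℕ} (hb : 1 < b) :
    (Polynomial.derivative (necklace b)).eval 1 = (Nat.totient b : ℚ) / b := by
  have hb0 : 0 < b := by omega
  rw [necklace, derivative_C_mul]
  rw [map_sum]
  have : ∀ d ∈ b.divisors,
      Polynomial.derivative (Polynomial.C ((ArithmeticFunction.moebius d : ℤ) : ℚ) * X ^ (b / d))
      = Polynomial.C ((ArithmeticFunction.moebius d : ℤ) : ℚ) *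
          (Polynomial.C ((b / d : ℕ) : ℚ) * X ^ (b / d - 1)) := by
    intro d _
    rw [derivative_C_mul, derivative_X_pow]
  rw [Finset.sum_congr rfl this]
  simp only [eval_mul, eval_C, eval_finset_sum, eval_pow, eval_X, one_pow, mul_one]
  rw [aux_sum_moebius_totient hb0]
  field_simp

lemma quot_eval_one (f : Polynomial ℚ) (h : f.eval 1 = 0) :
    (f /ₘ (X - 1)).eval 1 = (Polynomial.derivative f).eval 1 := by
  have hm : (X - 1 : Polynomial ℚ) = X - Polynomial.C 1 := by simp
  have hf : f = (X - Polynomial.C 1) * (f /ₘ (X - Polynomial.C 1)) := by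
    conv_lhs => rw [← modByMonic_add_div f (X - Polynomial.C (1 : ℚ))]
    rw [modByMonic_X_sub_C_eq_C_eval, h, map_zero, zero_add]
  rw [hm]
  conv_rhs => rw [hf]
  rw [derivative_mul]
  simp

theorem eval_one_rect_quotient (n a b : ℕ) (hn : 2 ≤ n) (hab : a * b = n) (hb : 1 < b) :
    (polyBinom (necklace b) a /ₘ (X - 1)).eval 1 =
      (-1) ^ (a + 1) * (Nat.totient b : ℚ) / n := by
  have ha : 1 ≤ a := by
    by_contra h
    interval_cases a
    omega
  have hb0 : (0 : ℚ) < b := by exact_mod_cast Nat.lt_of_lt_of_le Nat.zero_lt_one hb.le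
  set P := necklace b with hP
  have hP1 : P.eval 1 = 0 := necklace_eval_one hb
  -- split off the i = 0 factor
  have hsplit : polyBinom P a =
      Polynomial.C ((a.factorial : ℚ)⁻¹) *
        (P * ∏ i ∈ Finset.Ico 1 a, (P - Polynomial.C (i : ℚ))) := by
    rw [polyBinom, Finset.range_eq_Ico,
      Finset.prod_eq_prod_Ico_succ_bot (by omega : 0 < a)]
    simp
  set g : Polynomial ℚ := ∏ i ∈ Finset.Ico 1 a, (P - Polynomial.C (i : ℚ)) with hg
  have hf1 : (polyBinom P a).eval 1 = 0 := by
    rw [hsplit]; simp [hP1]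
  rw [quot_eval_one _ hf1, hsplit, derivative_C_mul, derivative_mul]
  have hgeval : g.eval 1 = (-1 : ℚ) ^ (a - 1) * ((a - 1).factorial : ℚ) := by
    rw [hg, eval_prod]
    have : ∀ i ∈ Finset.Ico 1 a, (P - Polynomial.C (i : ℚ)).eval 1 = (-1) * (i : ℚ) := by
      intro i _
      simp [hP1]
    rw [Finset.prod_congr rfl this, Finset.prod_mul_distrib, Finset.prod_const,
      Nat.card_Ico]
    congr 1
    have : a = (a - 1) + 1 := by omega
    rw [this, Nat.add_sub_cancel, ← Nat.cast_prod]
    exact_mod_cast congrArg (fun m : ℕ => (m : ℚ))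
      (Finset.prod_Ico_id_eq_factorial (a - 1))
  simp only [eval_mul, eval_add, eval_C]
  rw [hP1, necklace_deriv_eval_one hb, hgeval]
  have hfac : (a.factorial : ℚ) = (a : ℚ) * ((a - 1).factorial : ℚ) := by
    exact_mod_cast (Nat.mul_factorial_pred (by omega : a ≠ 0)).symm
  have hsign : (-1 : ℚ) ^ (a + 1) = (-1) ^ (a - 1) := by
    rw [show a + 1 = (a - 1) + 2 from (by omega), pow_add]
    simp
  have hfacpos : ((a - 1).factorial : ℚ) ≠ 0 := by positivity
  have ha0 : (0 : ℚ) < a := by exact_mod_cast ha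
  have hn' : (n : ℚ) = (a : ℚ) * b := by exact_mod_cast hab.symm
  rw [hsign, hfac, hn']
  field_simp
  ring
end

section
/- Let ψ be the character of the representation of S_n induced from the trivial character of the cyclic subgroup C_n generated by an n-cycle. Then for a partition λ of n, the sum of ψ over the conjugacy class C_λ equals n! φ(b)/n if λ = [b^a] with ab = n, and 0 otherwise. -/
open scoped Classical

/-- `g` has cycle type `[b^a]`: `a` cycles all of length `b` (fixed points, the
case `b = 1`, are excluded from `Equiv.Perm.cycleType`, hence the filter). -/
def hasCycleType {n : ℕ} (g : Equiv.Perm (Fin n)) (a b : ℕ) : Prop :=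
  g.cycleType = Multiset.filter (fun x => 2 ≤ x) (Multiset.replicate a b)

/-- The character of the representation of `S_n` induced from the trivial character
of the cyclic subgroup generated by `h`, via the Frobenius formula. -/
noncomputable def indTrivChar {n : ℕ} (h : Equiv.Perm (Fin n)) (g : Equiv.Perm (Fin n)) : ℚ :=
  (n : ℚ)⁻¹ * ∑ x : Equiv.Perm (Fin n),
    if x⁻¹ * g * x ∈ Subgroup.zpowers h then (1 : ℚ) else 0

section Aux

variable {n : ℕ} {h : Equiv.Perm (Fin n)}

lemma h_isCycle (hcyc : h.cycleType = {n}) : h.IsCycle :=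
  Equiv.Perm.card_cycleType_eq_one.mp (by rw [hcyc]; simp)

lemma h_orderOf (hcyc : h.cycleType = {n}) : orderOf h = n := by
  rw [← Equiv.Perm.lcm_cycleType, hcyc, Multiset.lcm_singleton, normalize_eq]

lemma h_fixfree (hcyc : h.cycleType = {n}) : ∀ x : Fin n, h x ≠ x := by
  have hcard : h.support.card = n := by
    rw [← Equiv.Perm.sum_cycleType, hcyc, Multiset.sum_singleton]
  have huniv : h.support = Finset.univ :=
    Finset.eq_univ_of_card _ (by rw [hcard, Fintype.card_fin])
  intro x
  rw [← Equiv.Perm.mem_support, huniv]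
  exact Finset.mem_univ x

lemma h_free (hcyc : h.cycleType = {n}) :
    ∀ y ∈ Subgroup.zpowers h, ∀ x : Fin n, y x = x → y = 1 := by
  intro y hy x hx
  obtain ⟨k, rfl⟩ := mem_powers_iff_mem_zpowers.mpr hy
  exact ((h_isCycle hcyc).pow_eq_one_iff' (h_fixfree hcyc x)).mpr hx

lemma cycleType_of_mem_zpowers (hcyc : h.cycleType = {n})
    {y : Equiv.Perm (Fin n)} (hy : y ∈ Subgroup.zpowers h) :
    y.cycleType = Multiset.filter (fun x => 2 ≤ x)
      (Multiset.replicate (n / orderOf y) (orderOf y)) := by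
  by_cases hy1 : y = 1
  · subst hy1
    rw [Equiv.Perm.cycleType_one, orderOf_one, Eq.comm, Multiset.filter_eq_nil]
    intro a ha
    rw [Multiset.eq_of_mem_replicate ha]
    omega
  · have hd2 : 2 ≤ orderOf y := by
      have h1 : orderOf y ≠ 1 := fun hh => hy1 (orderOf_eq_one_iff.mp hh)
      have h0 : 0 < orderOf y := orderOf_pos y
      omega
    have key : ∀ r ∈ y.cycleType, r = orderOf y := by
      intro r hr
      obtain ⟨c, τ, rfl, hdisj, hc, rfl⟩ := Equiv.Perm.mem_cycleType_iff.mp hr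
      obtain ⟨a, ha, -⟩ := id hc
      have hτa : τ a = a := (hdisj a).resolve_left ha
      have hpow : ∀ m : ℕ, ((c * τ) ^ m) a = (c ^ m) a := by
        intro m
        rw [hdisj.commute.mul_pow, Equiv.Perm.mul_apply,
          Equiv.Perm.pow_apply_eq_self_of_apply_eq_self hτa]
      have h1 : orderOf (c * τ) ∣ orderOf c := by
        apply orderOf_dvd_of_pow_eq_one
        apply h_free hcyc _ (Subgroup.pow_mem _ hy _) a
        rw [hpow, pow_orderOf_eq_one, Equiv.Perm.one_apply]
      have h2 : orderOf c ∣ orderOf (c * τ) := by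
        apply orderOf_dvd_of_pow_eq_one
        rw [hc.pow_eq_one_iff]
        exact ⟨a, ha, by rw [← hpow, pow_orderOf_eq_one, Equiv.Perm.one_apply]⟩
      rw [← hc.orderOf, dvd_antisymm h2 h1]
    have hsuppy : y.support = Finset.univ := by
      rw [Finset.eq_univ_iff_forall]
      intro x
      rw [Equiv.Perm.mem_support]
      intro hx
      exact hy1 (h_free hcyc y hy x hx)
    have hrep : y.cycleType = Multiset.replicate (Multiset.card y.cycleType) (orderOf y) :=
      Multiset.eq_replicate_card.mpr key
    have hsum : Multiset.card y.cycleType * orderOf y = n := by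
      have h3 := Equiv.Perm.sum_cycleType y
      rw [hsuppy, Finset.card_univ, Fintype.card_fin] at h3
      calc Multiset.card y.cycleType * orderOf y
          = (Multiset.replicate (Multiset.card y.cycleType) (orderOf y)).sum := by
            rw [Multiset.sum_replicate, smul_eq_mul]
        _ = y.cycleType.sum := by rw [← hrep]
        _ = n := h3
    have hdiv : n / orderOf y = Multiset.card y.cycleType :=
      Nat.div_eq_of_eq_mul_left (by omega) hsum.symm
    rw [hrep, hdiv, Eq.comm, Multiset.filter_eq_self]
    intro b hb
    rw [Multiset.eq_of_mem_replicate hb]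
    exact hd2

lemma hasCycleType_iff (hcyc : h.cycleType = {n}) (hn : 1 ≤ n)
    {y : Equiv.Perm (Fin n)} (hy : y ∈ Subgroup.zpowers h) {a b : ℕ} (hab : a * b = n) :
    hasCycleType y a b ↔ orderOf y = b := by
  have hA := cycleType_of_mem_zpowers hcyc hy
  have hd1 : 1 ≤ orderOf y := orderOf_pos y
  have hdn : orderOf y ∣ n := (orderOf_dvd_of_mem_zpowers hy).trans (dvd_of_eq (h_orderOf hcyc))
  have hb1 : 1 ≤ b := Nat.pos_of_ne_zero (fun h0 => by subst h0; simp at hab; omega)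
  have ha1 : 1 ≤ a := Nat.pos_of_ne_zero (fun h0 => by subst h0; simp at hab; omega)
  have hnd1 : 1 ≤ n / orderOf y := (Nat.one_le_div_iff hd1).mpr (Nat.le_of_dvd (by omega) hdn)
  have hfilt : ∀ m : ℕ, Multiset.filter (fun x => 2 ≤ x) (Multiset.replicate m 1) = 0 :=
    fun m => Multiset.filter_eq_nil.mpr
      (fun c hc => by rw [Multiset.eq_of_mem_replicate hc]; omega)
  have hfilt2 : ∀ m c : ℕ, 2 ≤ c →
      Multiset.filter (fun x => 2 ≤ x) (Multiset.replicate m c) = Multiset.replicate m c :=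
    fun m c h2 => Multiset.filter_eq_self.mpr
      (fun d hd => by rw [Multiset.eq_of_mem_replicate hd]; exact h2)
  constructor
  · intro ht
    rw [hasCycleType, hA] at ht
    by_cases hb2 : 2 ≤ b
    · by_cases hd2 : 2 ≤ orderOf y
      · rw [hfilt2 _ _ hd2, hfilt2 _ _ hb2] at ht
        have hm : b ∈ Multiset.replicate (n / orderOf y) (orderOf y) := by
          rw [ht]; exact Multiset.mem_replicate.mpr ⟨by omega, rfl⟩
        exact (Multiset.eq_of_mem_replicate hm).symm
      · have hd : orderOf y = 1 := by omega
        rw [hd, hfilt] at ht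
        have hm : b ∈ Multiset.filter (fun x => 2 ≤ x) (Multiset.replicate a b) :=
          Multiset.mem_filter.mpr ⟨Multiset.mem_replicate.mpr ⟨by omega, rfl⟩, hb2⟩
        rw [← ht] at hm
        simp at hm
    · have hb : b = 1 := by omega
      subst hb
      rw [hfilt a] at ht
      by_contra hne
      have hd2 : 2 ≤ orderOf y := by omega
      have hm : orderOf y ∈ Multiset.filter (fun x => 2 ≤ x)
          (Multiset.replicate (n / orderOf y) (orderOf y)) :=
        Multiset.mem_filter.mpr ⟨Multiset.mem_replicate.mpr ⟨by omega, rfl⟩, hd2⟩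
      rw [ht] at hm
      simp at hm
  · intro hd
    rw [hasCycleType, hA, hd]
    congr 2
    rw [← hab, Nat.mul_div_cancel _ (by omega)]

lemma zpowers_isCyclic (h : Equiv.Perm (Fin n)) : IsCyclic (Subgroup.zpowers h) := by
  refine ⟨⟨⟨h, Subgroup.mem_zpowers h⟩, fun x => ?_⟩⟩
  obtain ⟨y, hy⟩ := x
  obtain ⟨k, hk⟩ := Subgroup.mem_zpowers_iff.mp hy
  refine ⟨k, Subtype.ext ?_⟩
  rw [SubgroupClass.coe_zpow]
  exact hk

lemma count_orderOf (hcyc : h.cycleType = {n}) {b : ℕ} (hb : b ∣ n) :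
    (Finset.univ.filter fun y : Equiv.Perm (Fin n) =>
      y ∈ Subgroup.zpowers h ∧ orderOf y = b).card = Nat.totient b := by
  have : IsCyclic (Subgroup.zpowers h) := zpowers_isCyclic h
  have hcard : Fintype.card (Subgroup.zpowers h) = n := by
    rw [Fintype.card_zpowers, h_orderOf hcyc]
  rw [← IsCyclic.card_orderOf_eq_totient (α := Subgroup.zpowers h) (by rw [hcard]; exact hb)]
  refine Finset.card_bij'
    (fun y hy => (⟨y, (Finset.mem_filter.mp hy).2.1⟩ : Subgroup.zpowers h))
    (fun z _ => (z : Equiv.Perm (Fin n))) ?_ ?_ ?_ ?_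
  · intro y hy
    simp only [Finset.mem_filter, Finset.mem_univ, true_and] at hy ⊢
    rw [Subgroup.orderOf_mk]
    exact hy.2
  · intro z hz
    simp only [Finset.mem_filter, Finset.mem_univ, true_and] at hz ⊢
    exact ⟨z.2, by rw [Subgroup.orderOf_coe]; exact hz⟩
  · intro y hy
    rfl
  · intro z hz
    rfl

end Aux

theorem indTrivChar_class_sums (n : ℕ) (hn : 1 ≤ n) (h : Equiv.Perm (Fin n))
    (hcyc : h.cycleType = {n}) :
    (∀ a b : ℕ, a * b = n →
      ∑ g ∈ Finset.univ.filter (fun g : Equiv.Perm (Fin n) => hasCycleType g a b),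
        indTrivChar h g = (n.factorial : ℚ) * (Nat.totient b) / n) ∧
    (∀ g : Equiv.Perm (Fin n), (∀ a b : ℕ, a * b = n → ¬ hasCycleType g a b) →
      indTrivChar h g = 0) := by
  constructor
  · intro a b hab
    have hbn : b ∣ n := Dvd.intro_left a hab
    have inner : ∀ x : Equiv.Perm (Fin n),
        ∑ g ∈ Finset.univ.filter (fun g : Equiv.Perm (Fin n) => hasCycleType g a b),
          (if x⁻¹ * g * x ∈ Subgroup.zpowers h then (1 : ℚ) else 0)
        = (Nat.totient b : ℚ) := by
      intro x
      rw [Finset.sum_filter]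
      have hobl : ∀ y : Equiv.Perm (Fin n),
          (if hasCycleType y a b then
            (if x⁻¹ * y * x ∈ Subgroup.zpowers h then (1 : ℚ) else 0) else 0)
          = (fun z => if z ∈ Subgroup.zpowers h ∧ orderOf z = b then (1 : ℚ) else 0)
              (((Equiv.mulLeft x⁻¹).trans (Equiv.mulRight x)) y) := by
        intro y
        simp only [Equiv.trans_apply, Equiv.coe_mulLeft, Equiv.coe_mulRight]
        have e2 : hasCycleType y a b ↔ hasCycleType (x⁻¹ * y * x) a b := by
          unfold hasCycleType
          have := Equiv.Perm.cycleType_conj (σ := y) (τ := x⁻¹)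
          rw [inv_inv] at this
          rw [this]
        by_cases hyH : x⁻¹ * y * x ∈ Subgroup.zpowers h
        · by_cases hct : hasCycleType (x⁻¹ * y * x) a b
          · simp [e2.mpr hct, hyH, (hasCycleType_iff hcyc hn hyH hab).mp hct]
          · have h1 : ¬ hasCycleType y a b := fun hh => hct (e2.mp hh)
            have h2 : ¬ orderOf (x⁻¹ * y * x) = b :=
              fun hb' => hct ((hasCycleType_iff hcyc hn hyH hab).mpr hb')
            simp [h1, h2]
        · simp [hyH]
      rw [Fintype.sum_equiv ((Equiv.mulLeft x⁻¹).trans (Equiv.mulRight x)) _ (fun z => if z ∈ Subgroup.zpowers h ∧ orderOf z = b then (1 : ℚ) else 0) hobl]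
      rw [Finset.sum_boole]
      norm_cast
      exact count_orderOf hcyc hbn
    unfold indTrivChar
    rw [← Finset.mul_sum, Finset.sum_comm]
    rw [Finset.sum_congr rfl (fun x _ => inner x)]
    rw [Finset.sum_const, Finset.card_univ, Fintype.card_perm, Fintype.card_fin,
      nsmul_eq_mul]
    have hn0 : (n : ℚ) ≠ 0 := Nat.cast_ne_zero.mpr (by omega)
    field_simp
  · intro g hg
    unfold indTrivChar
    rw [Finset.sum_eq_zero, mul_zero]
    intro x _
    rw [if_neg]
    intro hmem
    have hA := cycleType_of_mem_zpowers hcyc hmem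
    have hdn : orderOf (x⁻¹ * g * x) ∣ n :=
      (orderOf_dvd_of_mem_zpowers hmem).trans (dvd_of_eq (h_orderOf hcyc))
    apply hg (n / orderOf (x⁻¹ * g * x)) (orderOf (x⁻¹ * g * x)) (Nat.div_mul_cancel hdn)
    have hconj : (x⁻¹ * g * x).cycleType = g.cycleType := by
      have := Equiv.Perm.cycleType_conj (σ := g) (τ := x⁻¹)
      rwa [inv_inv] at this
    unfold hasCycleType
    rw [← hconj]
    exact hA
end
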